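/- Let ℓ be an odd prime different from a prime p, let q = p if p is odd and q = 4 if p = 2, let K = Q_ℓ(ζ_q), and let W = K². Let N ⊆ SL₂(K) be the subgroup generated by diag(ζ_q, ζ_q^{-1}) and [[0,−1],[1,0]]. Then N is isomorphic to the generalized quaternion group Q_p of order 4p, and W is an absolutely simple faithful symplectic K[N]-module (with respect to the standard alternating form on K²). Moreover G = N × μ_ℓ is a group of inertia type for p. -/

import Mathlib

open Matrix

namespace Stmt19Aux

/-! ### Generic group-theoretic helpers -/

variable {G : Type*} [Group G]

lemma pow_mod (u : G) {n : ℕ} (h : u ^ n = 1) (x : ℕ) : u ^ (x % n) = u ^ x := by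
  conv_rhs => rw [← Nat.div_add_mod x n]
  rw [pow_add, pow_mul, h, one_pow, one_mul]

section Quat

variable (n : ℕ) [NeZero n] (A S : G)

def P (i : ZMod (2 * n)) : G := A ^ i.val

lemma P_add (hA : A ^ (2 * n) = 1) (i j : ZMod (2 * n)) :
    P n A (i + j) = P n A i * P n A j := by
  rw [P, P, P, ZMod.val_add, pow_mod _ hA, pow_add]

lemma P_natCast (hA : A ^ (2 * n) = 1) (k : ℕ) : P n A (k : ZMod (2 * n)) = A ^ k := by
  rw [P, ZMod.val_natCast, pow_mod _ hA]

lemma P_zero (hA : A ^ (2 * n) = 1) : P n A 0 = 1 := by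
  simpa using P_natCast n A hA 0

lemma P_neg (hA : A ^ (2 * n) = 1) (i : ZMod (2 * n)) : P n A (-i) = (P n A i)⁻¹ := by
  apply eq_inv_of_mul_eq_one_left
  rw [← P_add n A hA, neg_add_cancel, P_zero n A hA]

lemma pow_mul_S (hAS : A * S = S * A⁻¹) (k : ℕ) : A ^ k * S = S * (A ^ k)⁻¹ := by
  induction k with
  | zero => simp
  | succ k ih =>
    rw [pow_succ, mul_assoc, hAS, ← mul_assoc, ih, mul_assoc, ← _root_.mul_inv_rev]
    congr 2
    rw [← pow_succ, ← pow_succ']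

lemma P_mul_S (hA : A ^ (2 * n) = 1) (hAS : A * S = S * A⁻¹) (i : ZMod (2 * n)) :
    P n A i * S = S * P n A (-i) := by
  rw [P_neg n A hA, P, pow_mul_S A S hAS]

variable (hA : A ^ (2 * n) = 1) (hS : S * S = A ^ n) (hAS : A * S = S * A⁻¹)

/-- The homomorphism from the generalized quaternion group determined by elements `A`, `S`
satisfying the defining relations. -/
def quatHom : QuaternionGroup n →* G where
  toFun x := match x with
    | .a i => P n A i
    | .xa i => S * P n A i
  map_one' := by
    rw [QuaternionGroup.one_def]
    exact P_zero n A hA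
  map_mul' := by
    rintro (i | i) (j | j)
    · exact P_add n A hA i j
    · show S * P n A (j - i) = P n A i * (S * P n A j)
      rw [← mul_assoc, P_mul_S n A S hA hAS, mul_assoc, ← P_add n A hA, neg_add_eq_sub]
    · show S * P n A (i + j) = (S * P n A i) * P n A j
      rw [mul_assoc, ← P_add n A hA]
    · show P n A ((n : ZMod (2 * n)) + j - i) = (S * P n A i) * (S * P n A j)
      rw [mul_assoc, ← mul_assoc (P n A i), P_mul_S n A S hA hAS, ← mul_assoc, ← mul_assoc,
        hS, ← P_natCast n A hA, ← P_add n A hA, ← P_add n A hA]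
      congr 1
      ring

lemma quatHom_a (i : ZMod (2 * n)) : quatHom n A S hA hS hAS (.a i) = A ^ i.val := rfl

lemma quatHom_xa (i : ZMod (2 * n)) : quatHom n A S hA hS hAS (.xa i) = S * A ^ i.val := rfl

end Quat

lemma a_pow (n : ℕ) (i : ZMod (2 * n)) (k : ℕ) :
    (QuaternionGroup.a i) ^ k = QuaternionGroup.a ((k : ZMod (2 * n)) * i) := by
  induction k with
  | zero => rw [pow_zero, QuaternionGroup.one_def]; push_cast; rw [zero_mul]
  | succ k ih =>
    rw [pow_succ, ih, QuaternionGroup.a_mul_a]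
    congr 1
    push_cast
    ring

/-! ### The map to `ZMod 4` -/

section F

variable (n : ℕ) [NeZero n]

def F (i : ZMod (2 * n)) : ZMod 4 := 2 * (i.val : ZMod 4)

omit [NeZero n] in
lemma F_natmod (x : ℕ) : 2 * ((x % (2 * n) : ℕ) : ZMod 4) = 2 * (x : ZMod 4) := by
  have h : ((2 * n * (x / (2 * n)) + x % (2 * n) : ℕ) : ZMod 4) = (x : ZMod 4) := by
    rw [Nat.div_add_mod]
  push_cast at h
  have h4 : ∀ y : ZMod 4, 4 * y = 0 := by decide
  linear_combination 2 * h - h4 ((n : ZMod 4) * ((x / (2 * n) : ℕ) : ZMod 4))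

lemma F_add (i j : ZMod (2 * n)) : F n (i + j) = F n i + F n j := by
  rw [F, F, F, ZMod.val_add, F_natmod]
  push_cast
  ring

omit [NeZero n] in
lemma F_two_torsion (i : ZMod (2 * n)) : F n i + F n i = 0 := by
  rw [F, ← mul_add]
  have : (2 : ZMod 4) * ((i.val : ZMod 4) + (i.val : ZMod 4)) = 4 * (i.val : ZMod 4) := by ring
  rw [this, show (4 : ZMod 4) = 0 by decide, zero_mul]

omit [NeZero n] in
lemma F_zero : F n 0 = 0 := by
  simp [F, ZMod.val_zero]

lemma F_sub (i j : ZMod (2 * n)) : F n (i - j) = F n i - F n j := by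
  have := F_add n (i - j) j
  rw [sub_add_cancel] at this
  rw [this]; ring

lemma F_natCast_n (hn : n % 2 = 1) : F n ((n : ℕ) : ZMod (2 * n)) = 2 := by
  rw [F, ZMod.val_natCast, F_natmod]
  obtain ⟨m, hm⟩ : ∃ m, n = 2 * m + 1 := ⟨n / 2, by omega⟩
  subst hm
  have h4 : ∀ y : ZMod 4, 4 * y = 0 := by decide
  push_cast
  linear_combination h4 (m : ZMod 4)

def qf (hn : n % 2 = 1) : QuaternionGroup n →* Multiplicative (ZMod 4) where
  toFun x := match x with
    | .a i => Multiplicative.ofAdd (F n i)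
    | .xa i => Multiplicative.ofAdd (F n i + 1)
  map_one' := by
    rw [QuaternionGroup.one_def]
    show Multiplicative.ofAdd (F n 0) = 1
    rw [F_zero]; rfl
  map_mul' := by
    rintro (i | i) (j | j)
    · show Multiplicative.ofAdd (F n (i + j)) =
        Multiplicative.ofAdd (F n i) * Multiplicative.ofAdd (F n j)
      rw [← ofAdd_add, F_add]
    · show Multiplicative.ofAdd (F n (j - i) + 1) =
        Multiplicative.ofAdd (F n i) * Multiplicative.ofAdd (F n j + 1)
      rw [← ofAdd_add, F_sub]
      congr 1
      linear_combination -(F_two_torsion n i)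
    · show Multiplicative.ofAdd (F n (i + j) + 1) =
        Multiplicative.ofAdd (F n i + 1) * Multiplicative.ofAdd (F n j)
      rw [← ofAdd_add, F_add]
      congr 1
      ring
    · show Multiplicative.ofAdd (F n ((n : ZMod (2 * n)) + j - i)) =
        Multiplicative.ofAdd (F n i + 1) * Multiplicative.ofAdd (F n j + 1)
      rw [← ofAdd_add, F_sub, F_add, F_natCast_n n hn]
      congr 1
      linear_combination -(F_two_torsion n i)

lemma qf_a (hn : n % 2 = 1) (i : ZMod (2 * n)) :
    qf n hn (.a i) = Multiplicative.ofAdd (F n i) := rfl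

lemma qf_xa (hn : n % 2 = 1) (i : ZMod (2 * n)) :
    qf n hn (.xa i) = Multiplicative.ofAdd (F n i + 1) := rfl

lemma qf_surjective (hn : n % 2 = 1) : Function.Surjective (qf n hn) := by
  intro y
  obtain ⟨c, hc⟩ : ∃ c : ZMod 4, y = Multiplicative.ofAdd c := ⟨Multiplicative.toAdd y, rfl⟩
  rw [hc]
  have hcv : ((c.val : ℕ) : ZMod 4) = c := ZMod.natCast_zmod_val c
  rcases Nat.even_or_odd c.val with ⟨m, hm⟩ | ⟨m, hm⟩
  · refine ⟨.a ((m : ℕ) : ZMod (2 * n)), ?_⟩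
    rw [qf_a, F, ZMod.val_natCast, F_natmod]
    congr 1
    rw [← hcv, hm]
    push_cast
    ring
  · refine ⟨.xa ((m : ℕ) : ZMod (2 * n)), ?_⟩
    rw [qf_xa, F, ZMod.val_natCast, F_natmod]
    congr 1
    rw [← hcv, hm]
    push_cast
    ring

end F

/-! ### Primitive roots -/

lemma neg_isPrimitiveRoot {K : Type} [Field K] (hK : (-1 : K) ≠ 1) {p : ℕ} (hp : Odd p)
    {ζ : K} (hζ : IsPrimitiveRoot ζ p) : IsPrimitiveRoot (-ζ) (2 * p) := by
  constructor
  · rw [Even.neg_pow (even_two_mul p), mul_comm, pow_mul, hζ.pow_eq_one, one_pow]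
  · intro l hl
    have h2l : ζ ^ (2 * l) = 1 := by
      have h1 : ((-ζ) ^ l) ^ 2 = 1 := by rw [hl, one_pow]
      rw [← pow_mul, mul_comm l 2, Even.neg_pow (even_two_mul l)] at h1
      exact h1
    have hcop : Nat.Coprime p 2 := Nat.coprime_two_right.mpr hp
    have hpl : p ∣ l := hcop.dvd_of_dvd_mul_left (hζ.dvd_of_pow_eq_one _ h2l)
    obtain ⟨m, rfl⟩ := hpl
    have hne : (-1 : K) ^ (p * m) = 1 := by
      rw [neg_pow] at hl
      rw [pow_mul ζ p m, hζ.pow_eq_one, one_pow, mul_one] at hl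
      exact hl
    have heven : Even (p * m) := by
      by_contra hodd
      rw [Nat.not_even_iff_odd] at hodd
      rw [hodd.neg_one_pow] at hne
      exact hK hne
    have hmeven : Even m := by
      rcases Nat.even_mul.mp heven with h | h
      · exact absurd h (Nat.not_even_iff_odd.mpr hp)
      · exact h
    obtain ⟨t, rfl⟩ := hmeven
    exact ⟨t, by ring⟩

lemma pow_p_eq_neg_one {K : Type} [Field K] {p : ℕ} (hp : p ≠ 0) {z : K}
    (hz : IsPrimitiveRoot z (2 * p)) : z ^ p = -1 := by
  have h2 : z ^ p * z ^ p = 1 := by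
    rw [← pow_add, ← two_mul]
    exact hz.pow_eq_one
  rcases mul_self_eq_one_iff.mp h2 with h | h
  · exfalso
    have := Nat.le_of_dvd (Nat.pos_of_ne_zero hp) (hz.dvd_of_pow_eq_one _ h)
    omega
  · exact h

/-! ### Matrix units -/

variable {K : Type} [Field K]

abbrev M2 (K : Type) [Field K] := Matrix (Fin 2) (Fin 2) K

def dUnit (z : K) (hz : z ≠ 0) : (M2 K)ˣ where
  val := !![z, 0; 0, z⁻¹]
  inv := !![z⁻¹, 0; 0, z]
  val_inv := by
    rw [Matrix.mul_fin_two]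
    simp [mul_inv_cancel₀ hz, inv_mul_cancel₀ hz, Matrix.one_fin_two]
  inv_val := by
    rw [Matrix.mul_fin_two]
    simp [mul_inv_cancel₀ hz, inv_mul_cancel₀ hz, Matrix.one_fin_two]

def sUnit (K : Type) [Field K] : (M2 K)ˣ where
  val := !![0, -1; 1, 0]
  inv := !![0, 1; -1, 0]
  val_inv := by rw [Matrix.mul_fin_two]; simp [Matrix.one_fin_two]
  inv_val := by rw [Matrix.mul_fin_two]; simp [Matrix.one_fin_two]

lemma dUnit_val (z : K) (hz : z ≠ 0) : ((dUnit z hz : (M2 K)ˣ) : M2 K) = !![z, 0; 0, z⁻¹] := rfl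

lemma dUnit_inv_val (z : K) (hz : z ≠ 0) :
    (((dUnit z hz)⁻¹ : (M2 K)ˣ) : M2 K) = !![z⁻¹, 0; 0, z] := rfl

lemma sUnit_val : ((sUnit K : (M2 K)ˣ) : M2 K) = !![0, -1; 1, 0] := rfl

lemma dUnit_pow (z : K) (hz : z ≠ 0) (k : ℕ) :
    ((dUnit z hz ^ k : (M2 K)ˣ) : M2 K) = !![z ^ k, 0; 0, (z⁻¹) ^ k] := by
  induction k with
  | zero => simp [Matrix.one_fin_two]
  | succ k ih =>
    rw [pow_succ, Units.val_mul, ih, dUnit, Matrix.mul_fin_two]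
    simp [pow_succ]

lemma inertia_of_hom {G C : Type*} [Group G] [Group C] (p : ℕ) (Φ : G →* C)
    (hsurj : Function.Surjective Φ) (hcyc : IsCyclic C) (hker : IsPGroup p Φ.ker)
    (hcop : (Nat.card C).Coprime p) :
    ∃ (H : Subgroup G) (hH : H.Normal),
      IsPGroup p H ∧
      (letI := hH;
        IsCyclic (G ⧸ H) ∧ (Nat.card (G ⧸ H)).Coprime p) := by
  refine ⟨Φ.ker, MonoidHom.normal_ker Φ, hker, ?_, ?_⟩
  · haveI := hcyc
    exact isCyclic_of_surjective _
      (QuotientGroup.quotientKerEquivOfSurjective Φ hsurj).symm.surjective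
  · rw [Nat.card_congr (QuotientGroup.quotientKerEquivOfSurjective Φ hsurj).toEquiv]
    exact hcop

end Stmt19Aux

open Stmt19Aux

/-- Proposition 6.3(a): let `ℓ ≠ p` be an odd prime, `q = p` for odd `p` and `q = 4` for
`p = 2`, `K = ℚ_ℓ(ζ_q)` and `W = K²`.  Let `N ⊆ SL₂(K)` be generated by
`diag(ζ_q, ζ_q⁻¹)` and `[[0,-1],[1,0]]`.  Then `N` is isomorphic to the generalized
quaternion group `Q_p` of order `4p`, `W` is an absolutely simple faithful symplectic
`K[N]`-module for the standard alternating form, and `G = N × μ_ℓ` is a group of inertia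
type for `p`. -/
theorem stmt_19 (p ℓ q : ℕ) (hp : p.Prime) [Fact ℓ.Prime] (hodd : Odd ℓ) (hne : ℓ ≠ p)
    (hq : q = if p = 2 then 4 else p)
    (K : Type) [Field K] [Algebra ℚ_[ℓ] K]
    (ζq : K) (hζ : IsPrimitiveRoot ζq q) (hK : Algebra.adjoin ℚ_[ℓ] {ζq} = ⊤) :
    ∀ Nsub : Subgroup (Matrix (Fin 2) (Fin 2) K)ˣ,
      Nsub = Subgroup.closure
        {u : (Matrix (Fin 2) (Fin 2) K)ˣ |
          (u : Matrix (Fin 2) (Fin 2) K) = !![ζq, 0; 0, ζq⁻¹] ∨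
          (u : Matrix (Fin 2) (Fin 2) K) = !![0, -1; 1, 0]} →
      -- `N ≅ Q_p`, the generalized quaternion group of order `4p`:
      Nonempty (Nsub ≃* QuaternionGroup p) ∧
      -- `N` preserves the standard alternating form on `K²` (it lies in `SL₂`):
      (∀ u ∈ Nsub, ∀ x y : Fin 2 → K,
        ((u : Matrix (Fin 2) (Fin 2) K).mulVec x 0) * ((u : Matrix (Fin 2) (Fin 2) K).mulVec y 1)
          - ((u : Matrix (Fin 2) (Fin 2) K).mulVec x 1) * ((u : Matrix (Fin 2) (Fin 2) K).mulVec y 0)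
          = x 0 * y 1 - x 1 * y 0) ∧
      -- `W = K²` is a faithful `N`-module:
      (∀ u ∈ Nsub, (∀ x : Fin 2 → K, (u : Matrix (Fin 2) (Fin 2) K).mulVec x = x) → u = 1) ∧
      -- `W` is a simple `N`-module:
      (∀ U : Submodule K (Fin 2 → K),
        (∀ u ∈ Nsub, ∀ x ∈ U, (u : Matrix (Fin 2) (Fin 2) K).mulVec x ∈ U) →
        U = ⊥ ∨ U = ⊤) ∧
      -- `W` is absolutely simple: the commutant of `N` consists of scalars:
      (∀ φ : (Fin 2 → K) →ₗ[K] (Fin 2 → K),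
        (∀ u ∈ Nsub, ∀ x : Fin 2 → K,
          φ ((u : Matrix (Fin 2) (Fin 2) K).mulVec x) = (u : Matrix (Fin 2) (Fin 2) K).mulVec (φ x)) →
        ∃ c : K, φ = c • LinearMap.id) ∧
      -- `G = N × μ_ℓ` is a group of inertia type for `p`:
      (∃ (H : Subgroup (Nsub × Multiplicative (ZMod ℓ))) (hH : H.Normal),
        IsPGroup p H ∧
        (letI := hH;
          IsCyclic ((Nsub × Multiplicative (ZMod ℓ)) ⧸ H) ∧
          (Nat.card ((Nsub × Multiplicative (ZMod ℓ)) ⧸ H)).Coprime p)) := by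
  intro Nsub hNsub
  haveI : Fact p.Prime := ⟨hp⟩
  haveI : NeZero p := ⟨hp.pos.ne'⟩
  haveI : CharZero K := charZero_of_injective_algebraMap (algebraMap ℚ_[ℓ] K).injective
  have hq3 : 3 ≤ q := by
    rw [hq]
    split_ifs with h
    · omega
    · have := hp.two_le
      omega
  have hq0 : q ≠ 0 := by omega
  have hζ0 : ζq ≠ 0 := hζ.ne_zero hq0
  have hζζ : ζq ≠ ζq⁻¹ := by
    intro h
    have h2 : ζq ^ 2 = 1 := by
      rw [pow_two]
      nth_rewrite 2 [h]
      exact mul_inv_cancel₀ hζ0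
    have := Nat.le_of_dvd (by norm_num) (hζ.dvd_of_pow_eq_one _ h2)
    omega
  -- the primitive `2p`-th root of unity `z`
  obtain ⟨z, hz, hzD⟩ : ∃ z : K, IsPrimitiveRoot z (2 * p) ∧ (z = ζq ∨ z = -ζq) := by
    rcases eq_or_ne p 2 with h | h
    · refine ⟨ζq, ?_, Or.inl rfl⟩
      have : q = 2 * p := by rw [hq, if_pos h, h]
      rwa [this] at hζ
    · have hqp : q = p := by rw [hq, if_neg h]
      have hpodd : Odd p := hp.odd_of_ne_two h
      refine ⟨-ζq, ?_, Or.inr rfl⟩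
      refine neg_isPrimitiveRoot ?_ hpodd (hqp ▸ hζ)
      intro hc
      have h2 : (2 : K) = 0 := by linear_combination -hc
      exact two_ne_zero h2
  have h2p0 : (2 * p : ℕ) ≠ 0 := by have := hp.pos; omega
  have hz0 : z ≠ 0 := hz.ne_zero h2p0
  have hzp : z ^ p = -1 := pow_p_eq_neg_one (NeZero.ne p) hz
  -- the relevant units
  set Dt : (M2 K)ˣ := dUnit ζq hζ0 with hDt
  set St : (M2 K)ˣ := sUnit K with hSt
  set At : (M2 K)ˣ := dUnit z hz0 with hAt
  have hDmem : Dt ∈ Nsub := by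
    rw [hNsub]
    exact Subgroup.subset_closure (Or.inl rfl)
  have hSmem : St ∈ Nsub := by
    rw [hNsub]
    exact Subgroup.subset_closure (Or.inr rfl)
  have hSS : St * St = At ^ p := by
    apply Units.ext
    rw [Units.val_mul, hSt, hAt, sUnit_val, dUnit_pow, Matrix.mul_fin_two, hzp, inv_pow, hzp]
    norm_num
  have hDA : At = Dt ∨ At = St ^ 2 * Dt := by
    rcases hzD with h | h
    · left
      apply Units.ext
      rw [hAt, hDt, dUnit_val, dUnit_val, h]
    · right
      apply Units.ext
      rw [Units.val_mul, sq, Units.val_mul, hAt, hSt, hDt, dUnit_val, sUnit_val, dUnit_val,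
        Matrix.mul_fin_two, Matrix.mul_fin_two, h, inv_neg]
      norm_num
  have hAmem : At ∈ Nsub := by
    rcases hDA with h | h
    · rw [h]; exact hDmem
    · rw [h]; exact mul_mem (pow_mem hSmem 2) hDmem
  have hA2p : At ^ (2 * p) = 1 := by
    apply Units.ext
    rw [hAt, dUnit_pow, hz.pow_eq_one, inv_pow, hz.pow_eq_one, inv_one, Units.val_one,
      Matrix.one_fin_two]
  have hAS : At * St = St * At⁻¹ := by
    apply Units.ext
    rw [Units.val_mul, Units.val_mul, hAt, hSt, dUnit_val, sUnit_val, dUnit_inv_val,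
      Matrix.mul_fin_two, Matrix.mul_fin_two]
    norm_num
  -- the homomorphism from the quaternion group
  set φ : QuaternionGroup p →* (M2 K)ˣ := quatHom p At St hA2p hSS hAS with hφ
  have hφa : ∀ i : ZMod (2 * p), φ (.a i) = At ^ i.val := fun i => rfl
  have hφxa : ∀ i : ZMod (2 * p), φ (.xa i) = St * At ^ i.val := fun i => rfl
  have hφinj : Function.Injective φ := by
    rw [injective_iff_map_eq_one]
    rintro (i | i) h
    · rw [hφa] at h
      have hent : z ^ i.val = 1 := by
        have := congrArg (fun u : (M2 K)ˣ => (u : M2 K) 0 0) h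
        simp only [hAt, dUnit_pow, Units.val_one] at this
        simpa [Matrix.one_apply] using this
      have hdvd := hz.dvd_of_pow_eq_one _ hent
      have hlt : i.val < 2 * p := ZMod.val_lt i
      have hv0 : i.val = 0 := by
        rcases Nat.eq_zero_or_pos i.val with h' | h'
        · exact h'
        · exact absurd hlt (not_lt.mpr (Nat.le_of_dvd h' hdvd))
      have : i = 0 := (ZMod.val_eq_zero i).mp hv0
      rw [this, ← QuaternionGroup.one_def]
    · exfalso
      rw [hφxa] at h
      have := congrArg (fun u : (M2 K)ˣ => (u : M2 K) 0 0) h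
      simp only [Units.val_mul, hAt, hSt, dUnit_pow, sUnit_val, Matrix.mul_fin_two,
        Units.val_one] at this
      simpa [Matrix.one_apply] using this
  -- the range of φ is Nsub
  have hrange_le : φ.range ≤ Nsub := by
    rintro _ ⟨x, rfl⟩
    rcases x with i | i
    · rw [hφa]; exact pow_mem hAmem _
    · rw [hφxa]; exact mul_mem hSmem (pow_mem hAmem _)
  haveI : Fact (1 < 2 * p) := ⟨by have := hp.two_le; omega⟩
  have hAr : At ∈ φ.range := by
    refine ⟨.a 1, ?_⟩
    rw [hφa, ZMod.val_one, pow_one]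
  have hSr : St ∈ φ.range := by
    refine ⟨.xa 0, ?_⟩
    rw [hφxa, ZMod.val_zero, pow_zero, mul_one]
  have hDr : Dt ∈ φ.range := by
    rcases hDA with h | h
    · rw [← h]; exact hAr
    · have : Dt = (St ^ 2)⁻¹ * At := by rw [h]; group
      rw [this]
      exact mul_mem (inv_mem (pow_mem hSr 2)) hAr
  have hle_range : Nsub ≤ φ.range := by
    rw [hNsub, Subgroup.closure_le]
    rintro u (hu | hu)
    · have : u = Dt := Units.ext hu
      rw [this]; exact hDr
    · have : u = St := Units.ext hu
      rw [this]; exact hSr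
  -- the isomorphism
  let φ' : QuaternionGroup p →* Nsub := φ.codRestrict Nsub (fun x => hrange_le ⟨x, rfl⟩)
  have hφ'bij : Function.Bijective φ' := by
    constructor
    · intro x y hxy
      exact hφinj (congrArg Subtype.val hxy)
    · rintro ⟨u, hu⟩
      obtain ⟨x, hx⟩ := hle_range hu
      exact ⟨x, Subtype.ext hx⟩
  let e : Nsub ≃* QuaternionGroup p := (MulEquiv.ofBijective φ' hφ'bij).symm
  refine ⟨⟨e⟩, ?_, ?_, ?_, ?_, ?_⟩
  -- part 2 : symplectic
  · have hdet : ∀ u ∈ Nsub, Matrix.det (u : M2 K) = 1 := by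
      have hker : Nsub ≤ (Units.map (Matrix.detMonoidHom : M2 K →* K)).ker := by
        rw [hNsub, Subgroup.closure_le]
        rintro u (hu | hu) <;>
        · rw [SetLike.mem_coe, MonoidHom.mem_ker]
          apply Units.ext
          show Matrix.det (u : M2 K) = 1
          rw [hu, Matrix.det_fin_two]
          simp [mul_inv_cancel₀ hζ0]
      intro u hu
      have := hker hu
      rw [MonoidHom.mem_ker] at this
      have := congrArg Units.val this
      simpa using this
    intro u hu x y
    have h := hdet u hu
    rw [Matrix.det_fin_two] at h
    simp only [Matrix.mulVec, dotProduct, Fin.sum_univ_two]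
    linear_combination (x 0 * y 1 - x 1 * y 0) * h
  -- part 3 : faithful
  · intro u hu hfix
    apply Units.ext
    show (u : M2 K) = 1
    ext i j
    have := congrFun (hfix (Pi.single j 1)) i
    rw [Matrix.mulVec_single] at this
    simp only [MulOpposite.op_one, one_smul, Matrix.col_apply] at this
    rw [this]
    simp [Matrix.one_apply, Pi.single_apply, eq_comm]
  -- part 4 : simple
  · intro U hU
    rcases eq_or_ne U ⊥ with h | h
    · exact Or.inl h
    right
    obtain ⟨x, hxU, hx0⟩ := Submodule.exists_mem_ne_zero_of_ne_bot h
    have he0e1 : ∀ v : Fin 2 → K,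
        v = v 0 • (Pi.single 0 1 : Fin 2 → K) + v 1 • (Pi.single 1 1 : Fin 2 → K) := by
      intro v
      ext i
      fin_cases i <;> simp
    have hSe0 : (St : M2 K).mulVec (Pi.single 0 1) = Pi.single 1 1 := by
      show (!![0, -1; 1, 0] : M2 K).mulVec _ = _
      ext i
      fin_cases i <;>
        simp [Matrix.mulVec, dotProduct, Fin.sum_univ_two, Pi.single_apply]
    have hSe1 : (St : M2 K).mulVec (Pi.single 1 1) = -Pi.single 0 1 := by
      show (!![0, -1; 1, 0] : M2 K).mulVec _ = _
      ext i
      fin_cases i <;>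
        simp [Matrix.mulVec, dotProduct, Fin.sum_univ_two, Pi.single_apply]
    have key : Pi.single (0 : Fin 2) (1 : K) ∈ U ∧ Pi.single (1 : Fin 2) (1 : K) ∈ U := by
      rcases eq_or_ne (x 1) 0 with hx1 | hx1
      · have hx00 : x 0 ≠ 0 := by
          intro hx00
          apply hx0
          rw [he0e1 x, hx00, hx1]
          simp
        have he0 : Pi.single (0 : Fin 2) (1 : K) ∈ U := by
          have : (x 0)⁻¹ • x ∈ U := Submodule.smul_mem U _ hxU
          have hxe : (x 0)⁻¹ • x = Pi.single 0 1 := by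
            rw [he0e1 x, hx1]
            ext i
            fin_cases i <;> simp [inv_mul_cancel₀ hx00]
          rwa [hxe] at this
        exact ⟨he0, by
          have := hU St hSmem _ he0
          rwa [hSe0] at this⟩
      · have hD : (Dt : M2 K).mulVec x ∈ U := hU Dt hDmem x hxU
        have hsub : ζq • x - (Dt : M2 K).mulVec x ∈ U :=
          Submodule.sub_mem U (Submodule.smul_mem U _ hxU) hD
        have hw : ζq • x - (Dt : M2 K).mulVec x
            = ((ζq - ζq⁻¹) * x 1) • (Pi.single 1 1 : Fin 2 → K) := by
          show ζq • x - (!![ζq, 0; 0, ζq⁻¹] : M2 K).mulVec x = _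
          ext i
          fin_cases i <;>
            simp [Matrix.mulVec, dotProduct, Fin.sum_univ_two, Pi.single_apply] <;>
            ring
        have hcoef : (ζq - ζq⁻¹) * x 1 ≠ 0 :=
          mul_ne_zero (sub_ne_zero.mpr hζζ) hx1
        have he1 : Pi.single (1 : Fin 2) (1 : K) ∈ U := by
          have h1 : ((ζq - ζq⁻¹) * x 1)⁻¹ • (ζq • x - (Dt : M2 K).mulVec x) ∈ U :=
            Submodule.smul_mem U _ hsub
          rw [hw, smul_smul, inv_mul_cancel₀ hcoef, one_smul] at h1
          exact h1
        refine ⟨?_, he1⟩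
        have := hU St hSmem _ he1
        rw [hSe1] at this
        have := Submodule.neg_mem U this
        rwa [neg_neg] at this
    refine eq_top_iff.mpr fun v _ => ?_
    rw [he0e1 v]
    exact Submodule.add_mem U
      (Submodule.smul_mem U _ key.1) (Submodule.smul_mem U _ key.2)
  -- part 5 : absolutely simple
  · intro ψ hcomm
    set e0 : Fin 2 → K := Pi.single 0 1 with he0def
    set e1 : Fin 2 → K := Pi.single 1 1 with he1def
    have hDe0 : (Dt : M2 K).mulVec e0 = ζq • e0 := by
      show (!![ζq, 0; 0, ζq⁻¹] : M2 K).mulVec _ = _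
      ext i
      fin_cases i <;> simp [Matrix.mulVec, dotProduct, Fin.sum_univ_two,
        Pi.single_apply, e0, e1]
    have hDe1 : (Dt : M2 K).mulVec e1 = ζq⁻¹ • e1 := by
      show (!![ζq, 0; 0, ζq⁻¹] : M2 K).mulVec _ = _
      ext i
      fin_cases i <;> simp [Matrix.mulVec, dotProduct, Fin.sum_univ_two,
        Pi.single_apply, e0, e1]
    have hSe0 : (St : M2 K).mulVec e0 = e1 := by
      show (!![0, -1; 1, 0] : M2 K).mulVec _ = _
      ext i
      fin_cases i <;> simp [Matrix.mulVec, dotProduct, Fin.sum_univ_two,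
        Pi.single_apply, e0, e1]
    -- ψ e0 has second coordinate 0
    have h10 : ψ e0 1 = 0 := by
      have h := hcomm Dt hDmem e0
      rw [hDe0, _root_.map_smul] at h
      have h1 := congrFun h 1
      show _
      have hrhs : (Dt : M2 K).mulVec (ψ e0) 1 = ζq⁻¹ * ψ e0 1 := by
        show (!![ζq, 0; 0, ζq⁻¹] : M2 K).mulVec _ 1 = _
        simp [Matrix.mulVec, dotProduct, Fin.sum_univ_two]
      rw [hrhs] at h1
      have h1' : ζq * ψ e0 1 = ζq⁻¹ * ψ e0 1 := by
        simpa using h1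
      by_contra hne0
      exact hζζ (mul_right_cancel₀ hne0 h1')
    have h01 : ψ e1 0 = 0 := by
      have h := hcomm Dt hDmem e1
      rw [hDe1, _root_.map_smul] at h
      have h1 := congrFun h 0
      have hrhs : (Dt : M2 K).mulVec (ψ e1) 0 = ζq * ψ e1 0 := by
        show (!![ζq, 0; 0, ζq⁻¹] : M2 K).mulVec _ 0 = _
        simp [Matrix.mulVec, dotProduct, Fin.sum_univ_two]
      rw [hrhs] at h1
      have h1' : ζq⁻¹ * ψ e1 0 = ζq * ψ e1 0 := by
        simpa using h1
      by_contra hne0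
      exact hζζ (mul_right_cancel₀ hne0 h1').symm
    have h11 : ψ e1 1 = ψ e0 0 := by
      have h := hcomm St hSmem e0
      rw [hSe0] at h
      have h1 := congrFun h 1
      have hrhs : (St : M2 K).mulVec (ψ e0) 1 = ψ e0 0 := by
        show (!![0, -1; 1, 0] : M2 K).mulVec _ 1 = _
        simp [Matrix.mulVec, dotProduct, Fin.sum_univ_two]
      rw [hrhs] at h1
      exact h1
    refine ⟨ψ e0 0, LinearMap.ext fun x => ?_⟩
    obtain ⟨a, b, hx⟩ : ∃ a b : K, x = a • e0 + b • e1 :=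
      ⟨x 0, x 1, by ext j; fin_cases j <;> simp [e0, e1]⟩
    rw [hx, map_add, _root_.map_smul, _root_.map_smul]
    funext i
    fin_cases i <;>
      simp [e0, e1, h10, h01, h11, mul_comm]
  -- part 6 : inertia type
  · have cardMultZMod : ∀ n : ℕ, Nat.card (Multiplicative (ZMod n)) = n := by
      intro n
      rw [Nat.card_congr (Multiplicative.toAdd (α := ZMod n)), Nat.card_zmod]
    rcases eq_or_ne p 2 with hp2 | hp2
    · -- the case `p = 2`
      subst hp2
      refine inertia_of_hom 2 (MonoidHom.snd Nsub (Multiplicative (ZMod ℓ)))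
        (fun m => ⟨(1, m), rfl⟩) inferInstance ?_ ?_
      · rintro ⟨⟨x, m⟩, hg⟩
        refine ⟨3, ?_⟩
        have hm : m = 1 := MonoidHom.mem_ker.mp hg
        have hx8 : x ^ 8 = 1 := by
          apply e.injective
          rw [map_pow, _root_.map_one]
          have hcard : Fintype.card (QuaternionGroup 2) = 8 := by
            rw [QuaternionGroup.card]
          calc e x ^ 8 = e x ^ Fintype.card (QuaternionGroup 2) := by rw [hcard]
            _ = 1 := pow_card_eq_one
        apply Subtype.ext
        show ((x, m) : Nsub × Multiplicative (ZMod ℓ)) ^ (2 ^ 3) = 1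
        rw [Prod.pow_mk, hm, one_pow]
        rw [show (2 ^ 3 : ℕ) = 8 by norm_num, hx8]
        rfl
      · rw [cardMultZMod]
        exact (Nat.coprime_primes Fact.out hp).mpr hne
    · -- the case `p` odd
      have hpodd : p % 2 = 1 := Nat.odd_iff.mp (hp.odd_of_ne_two hp2)
      have hℓ2 : (2 : ℕ) ≠ ℓ := by
        have := Nat.odd_iff.mp hodd
        omega
      have cop4 : Nat.Coprime 4 ℓ := by
        rw [show (4 : ℕ) = 2 ^ 2 by norm_num]
        exact Nat.Coprime.pow_left 2 ((Nat.coprime_primes Nat.prime_two Fact.out).mpr hℓ2)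
      set f : Nsub →* Multiplicative (ZMod 4) := (qf p hpodd).comp e.toMonoidHom with hf
      set Φ : Nsub × Multiplicative (ZMod ℓ) →*
          Multiplicative (ZMod 4) × Multiplicative (ZMod ℓ) :=
        f.prodMap (MonoidHom.id (Multiplicative (ZMod ℓ))) with hΦdef
      refine inertia_of_hom p Φ ?_ ?_ ?_ ?_
      · -- surjectivity
        have : Function.Surjective f := (qf_surjective p hpodd).comp e.surjective
        rw [hΦdef]
        rw [MonoidHom.coe_prodMap]
        exact Function.Surjective.prodMap this (fun m => ⟨m, rfl⟩)
      · -- cyclicity of the target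
        have χ : Multiplicative (ZMod (4 * ℓ)) ≃*
            Multiplicative (ZMod 4) × Multiplicative (ZMod ℓ) :=
          (AddEquiv.toMultiplicative (ZMod.chineseRemainder cop4).toAddEquiv).trans
            (MulEquiv.prodMultiplicative (ZMod 4) (ZMod ℓ))
        exact isCyclic_of_surjective χ.toMonoidHom χ.surjective
      · -- the kernel is a p-group
        rintro ⟨⟨x, m⟩, hg⟩
        refine ⟨1, ?_⟩
        have hg' : Φ (x, m) = 1 := MonoidHom.mem_ker.mp hg
        have h1 : f x = 1 := congrArg Prod.fst hg'
        have hm : m = 1 := congrArg Prod.snd hg'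
        have hxp : x ^ p = 1 := by
          apply e.injective
          rw [map_pow, _root_.map_one]
          have h1' : qf p hpodd (e x) = 1 := h1
          cases hy : e x with
          | a i =>
            rw [hy] at h1'
            rw [qf_a, ofAdd_eq_one, F] at h1'
            have h4 : ((2 * i.val : ℕ) : ZMod 4) = 0 := by
              push_cast
              exact h1'
            have hdvd : 2 ∣ i.val := by
              have := (ZMod.natCast_eq_zero_iff _ _).mp h4
              omega
            obtain ⟨t, ht⟩ := hdvd
            rw [a_pow]
            have hzero : ((p : ℕ) : ZMod (2 * p)) * i = 0 := by
              rw [← ZMod.natCast_zmod_val i]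
              rw [← Nat.cast_mul, ZMod.natCast_eq_zero_iff]
              exact ⟨t, by rw [ht]; ring⟩
            rw [hzero, ← QuaternionGroup.one_def]
          | xa i =>
            exfalso
            rw [hy] at h1'
            rw [qf_xa, ofAdd_eq_one] at h1'
            have hFi : F p i = -1 := by linear_combination h1'
            have := F_two_torsion p i
            rw [hFi] at this
            exact absurd this (by decide)
        apply Subtype.ext
        show ((x, m) : Nsub × Multiplicative (ZMod ℓ)) ^ (p ^ 1) = 1
        rw [pow_one, Prod.pow_mk, hm, one_pow, hxp]
        rfl
      · -- coprimality
        rw [Nat.card_prod, cardMultZMod, cardMultZMod]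
        refine Nat.Coprime.mul ?_ ((Nat.coprime_primes Fact.out hp).mpr hne)
        rw [show (4 : ℕ) = 2 ^ 2 by norm_num]
        exact Nat.Coprime.pow_left 2 ((Nat.coprime_primes Nat.prime_two hp).mpr (Ne.symm hp2))
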